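/- The 4×4 matrix b = (1/144)·[[11,8,5,12],[8,8,8,12],[5,8,11,12],[12,12,12,24]] is positive semidefinite. -/

import Mathlib

theorem stmt_2 :
    ((1/144 : ℝ) •
      !![11, 8, 5, 12; 8, 8, 8, 12; 5, 8, 11, 12; 12, 12, 12, 24] :
      Matrix (Fin 4) (Fin 4) ℝ).PosSemidef := by
  rw [Matrix.posSemidef_iff_dotProduct_mulVec]
  constructor
  · ext i j
    fin_cases i <;> fin_cases j <;>
      simp [Matrix.conjTranspose_apply]
  · intro x
    simp only [dotProduct, Matrix.mulVec, Matrix.smul_apply, Fin.sum_univ_four,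
      smul_eq_mul, star_trivial]
    norm_num [Matrix.cons_val_zero, Matrix.cons_val_one, Matrix.head_cons,
      Matrix.cons_val', Matrix.empty_val', Matrix.cons_val_fin_one,
      Fin.isValue, show (2:Fin 4) = ⟨2,by norm_num⟩ from rfl,
      show (3:Fin 4) = ⟨3,by norm_num⟩ from rfl]
    simp [Matrix.vecHead, Matrix.vecTail]
    nlinarith [sq_nonneg (x 0 - x 2), sq_nonneg (x 0 + x 1 + x 2 + 2 * x 3),
      sq_nonneg (x 0 + x 2 + x 3), sq_nonneg (x 1 + x 3), sq_nonneg (x 3),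
      sq_nonneg (x 0 + 2 * x 1 + x 2 + 2 * x 3), sq_nonneg (x 0 + x 1 + x 2 + x 3)]
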